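/- Let α > 0 and C > 0. There exists a constant K > 0, depending only on α and C, such that for all x ∈ ℝ and t ≥ 1 with 0 ≤ 1/(12α) − x/t ≤ C·t^{−2/3}, and for every real l ≥ 0 and k = k₂ + l·e^{−iπ/6}, where k₂ = (2/3)·(−1 + √(1 − 12α·x/t)), one has exp(−(3/4)·t·Re(Φ(k) − Φ(−2/3))) ≤ K·exp(−|z|³/6), where z = (1/8)·(3/α²)^{1/3}·(k + 2/3)·t^{1/3}. -/

import Mathlib

open Complex

/-- The phase function Φ(k) = (i/(4α))·[(x/t)·k + (1/(16α))·(k³ + 2k²)]. -/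
noncomputable def Phi (α x t : ℝ) (k : ℂ) : ℂ :=
  (Complex.I / (4 * (α : ℂ))) *
    (((x / t : ℝ) : ℂ) * k + (1 / (16 * (α : ℂ))) * (k ^ 3 + 2 * k ^ 2))

set_option maxHeartbeats 1000000 in
theorem stmt_8 (α C : ℝ) (hα : 0 < α) (hC : 0 < C) :
    ∃ K : ℝ, 0 < K ∧
      ∀ (x t : ℝ), 1 ≤ t →
        0 ≤ 1 / (12 * α) - x / t → 1 / (12 * α) - x / t ≤ C * t ^ (-(2:ℝ)/3) →
        ∀ l : ℝ, 0 ≤ l →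
          ∀ k : ℂ, k = (((2/3) * (-1 + Real.sqrt (1 - 12 * α * (x / t))) : ℝ) : ℂ) +
              (l : ℂ) * Complex.exp (-(Complex.I * (Real.pi / 6))) →
            Real.exp (-(3/4) * t * (Phi α x t k - Phi α x t (-2/3)).re) ≤
              K * Real.exp (-‖
                ((((1:ℝ)/8 * (3 / α ^ 2) ^ ((1:ℝ)/3) * t ^ ((1:ℝ)/3) : ℝ) : ℂ) *
                  (k + 2/3))‖ ^ 3 / 6) := by
  have hα' : α ≠ 0 := ne_of_gt hα
  set B : ℝ := Real.sqrt (((16/3)*α*C)^3) with hB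
  set M : ℝ := 4 * B / (1024 * α^2) with hM
  refine ⟨Real.exp M, Real.exp_pos _, ?_⟩
  intro x t ht h1 h2 l hl k hk
  have ht0 : (0:ℝ) < t := lt_of_lt_of_le one_pos ht
  have hin : 0 ≤ 1 - 12*α*(x/t) := by
    have : 1 - 12*α*(x/t) = 12*α*(1/(12*α) - x/t) := by field_simp
    rw [this]; positivity
  set a : ℝ := (2/3) * Real.sqrt (1 - 12*α*(x/t)) with ha_def
  have ha0 : 0 ≤ a := by positivity
  have ha2 : a^2 = (4/9)*(1 - 12*α*(x/t)) := by
    rw [ha_def, mul_pow, Real.sq_sqrt hin]; ring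
  have hxt : x/t = 1/(12*α) - 3*a^2/(16*α) := by
    rw [ha2]; field_simp; ring
  -- exp(-i pi/6)
  have he : Complex.exp (-(Complex.I * (Real.pi / 6))) =
      ((Real.sqrt 3 / 2 : ℝ) : ℂ) - ((1/2 : ℝ) : ℂ) * Complex.I := by
    rw [show -(Complex.I * ((Real.pi : ℂ) / 6)) = ((-(Real.pi/6) : ℝ) : ℂ) * Complex.I by
        push_cast; ring,
      Complex.exp_mul_I, ← Complex.ofReal_cos, ← Complex.ofReal_sin,
      Real.cos_neg, Real.sin_neg, Real.cos_pi_div_six, Real.sin_pi_div_six]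
    push_cast; ring
  have hk' : k = ((a - 2/3 + Real.sqrt 3/2*l : ℝ) : ℂ) + ((-(l/2) : ℝ) : ℂ) * Complex.I := by
    rw [hk, he, ha_def]; push_cast; ring
  set R : ℝ := (3*Real.sqrt 3*a*l^2 + 2*l^3)/(128*α^2) with hRdef
  have h3 : (Real.sqrt 3)^2 = 3 := Real.sq_sqrt (by norm_num)
  have hre : (Phi α x t k - Phi α x t (-2/3)).re = R := by
    rw [hRdef, hk']
    simp only [Phi, hxt]
    simp [Complex.div_re, Complex.div_im, Complex.mul_re, Complex.mul_im, Complex.add_re,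
      Complex.add_im, Complex.sub_re, Complex.sub_im, Complex.normSq, pow_succ, pow_zero,
      Complex.ofReal_re, Complex.ofReal_im, Complex.I_re, Complex.I_im, MonoidWithZeroHom.coe_mk]
    field_simp
    linear_combination (l^3 * 41472) * h3
  have hs3 : (1:ℝ) ≤ Real.sqrt 3 := by
    rw [show (1:ℝ) = Real.sqrt 1 by simp]
    exact Real.sqrt_le_sqrt (by norm_num)
  have hR0 : 0 ≤ R := by
    rw [hRdef]
    apply div_nonneg _ (by positivity)
    have := pow_nonneg hl 3
    nlinarith [mul_nonneg (mul_nonneg ha0 hl) hl]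
  -- abs bound
  set c : ℝ := (1:ℝ)/8 * (3 / α ^ 2) ^ ((1:ℝ)/3) * t ^ ((1:ℝ)/3) with hc_def
  have hc0 : 0 ≤ c := by positivity
  have habsu : ‖k + 2/3‖ ≤ a + l := by
    have hk2 : k + 2/3 = (a:ℂ) + (l:ℂ) * Complex.exp (-(Complex.I * (Real.pi/6))) := by
      rw [hk, ha_def]; push_cast; ring
    rw [hk2]
    calc ‖(a:ℂ) + (l:ℂ) * Complex.exp (-(Complex.I * (Real.pi/6)))‖
        ≤ ‖(a:ℂ)‖ + ‖(l:ℂ) * Complex.exp (-(Complex.I * (Real.pi/6)))‖ :=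
          norm_add_le _ _
      _ = a + l := by
          rw [norm_mul, Complex.norm_exp]
          simp [Complex.norm_real, Real.norm_eq_abs, _root_.abs_of_nonneg ha0, _root_.abs_of_nonneg hl]
  have hc3 : c^3 = 3*t/(512*α^2) := by
    have e1 : ((3 / α ^ 2 : ℝ) ^ ((1:ℝ)/3))^(3:ℕ) = 3/α^2 := by
      rw [← Real.rpow_natCast ((3 / α ^ 2 : ℝ) ^ ((1:ℝ)/3)) 3, ← Real.rpow_mul (by positivity)]
      norm_num
    have e2 : ((t:ℝ) ^ ((1:ℝ)/3))^(3:ℕ) = t := by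
      rw [← Real.rpow_natCast ((t:ℝ) ^ ((1:ℝ)/3)) 3, ← Real.rpow_mul ht0.le]
      norm_num
    rw [hc_def, mul_pow, mul_pow, e1, e2]
    field_simp; ring
  have hz3 : ‖(c:ℂ) * (k + 2/3)‖^3 ≤ 3*t/(512*α^2) * (a+l)^3 := by
    rw [norm_mul, Complex.norm_real, Real.norm_eq_abs, _root_.abs_of_nonneg hc0]
    calc (c * ‖k + 2/3‖)^3 ≤ (c * (a+l))^3 := by
          apply pow_le_pow_left₀ (by positivity)
          exact mul_le_mul_of_nonneg_left habsu hc0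
      _ = 3*t/(512*α^2) * (a+l)^3 := by rw [mul_pow, hc3]
  -- bound t * a^3
  have ha2' : a^2 ≤ (16/3)*α*(C * t ^ (-(2:ℝ)/3)) := by
    rw [ha2]
    have h' : 1 - 12*α*(x/t) = 12*α*(1/(12*α) - x/t) := by field_simp
    rw [h']
    have key := mul_le_mul_of_nonneg_left h2 (by positivity : (0:ℝ) ≤ (16/3)*α)
    linarith [key]
  have htm : (t ^ (-(2:ℝ)/3))^(3:ℕ) = (t^2)⁻¹ := by
    rw [← Real.rpow_natCast (t ^ (-(2:ℝ)/3)) 3, ← Real.rpow_mul ht0.le]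
    norm_num
  have htB : t * a^3 ≤ B := by
    have hsq : (t * a^3)^2 ≤ ((16/3)*α*C)^3 := by
      have h6 : a^6 ≤ ((16/3)*α*(C * t ^ (-(2:ℝ)/3)))^3 := by
        calc a^6 = (a^2)^3 := by ring
          _ ≤ ((16/3)*α*(C * t ^ (-(2:ℝ)/3)))^3 := pow_le_pow_left₀ (sq_nonneg a) ha2' 3
      have hrw : ((16/3)*α*(C * t ^ (-(2:ℝ)/3)))^3 = ((16/3)*α*C)^3 * (t^2)⁻¹ := by
        rw [show ((16/3)*α*(C * t ^ (-(2:ℝ)/3)))^3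
            = ((16/3)*α*C)^3 * ((t ^ (-(2:ℝ)/3))^(3:ℕ)) by ring, htm]
      have : (t * a^3)^2 = t^2 * a^6 := by ring
      rw [this]
      calc t^2 * a^6 ≤ t^2 * (((16/3)*α*C)^3 * (t^2)⁻¹) := by
            rw [← hrw]; exact mul_le_mul_of_nonneg_left h6 (sq_nonneg t)
        _ = ((16/3)*α*C)^3 := by field_simp
    have h0 : 0 ≤ t * a^3 := by positivity
    calc t * a^3 = Real.sqrt ((t*a^3)^2) := (Real.sqrt_sq h0).symm
      _ ≤ B := by rw [hB]; exact Real.sqrt_le_sqrt hsq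
  -- key polynomial inequality
  have key : (a+l)^3 ≤ 4*a^3 + 6*(3*Real.sqrt 3*a*l^2 + 2*l^3) := by
    nlinarith [mul_nonneg ha0 (sq_nonneg (a - l/2)), mul_nonneg ha0 (sq_nonneg l),
      pow_nonneg hl 3, mul_nonneg (mul_nonneg ha0 hl) hl,
      mul_nonneg (mul_nonneg ha0 hl) (mul_nonneg hl hl)]
  -- finish
  rw [hre, ← Real.exp_add]
  apply Real.exp_le_exp.mpr
  have hfin : ‖(c:ℂ) * (k + 2/3)‖^3 / 6 ≤ M + (3/4)*t*R := by
    have step1 : ‖(c:ℂ) * (k + 2/3)‖^3 / 6 ≤ t*(a+l)^3/(1024*α^2) := by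
      calc ‖(c:ℂ) * (k + 2/3)‖^3 / 6 ≤ (3*t/(512*α^2) * (a+l)^3)/6 := by
            linarith [hz3]
        _ = t*(a+l)^3/(1024*α^2) := by field_simp; ring
    have step2 : t*(a+l)^3 ≤ 4*B + 6*t*(3*Real.sqrt 3*a*l^2 + 2*l^3) := by
      have := mul_le_mul_of_nonneg_left key ht0.le
      nlinarith [htB]
    calc ‖(c:ℂ) * (k + 2/3)‖^3 / 6 ≤ t*(a+l)^3/(1024*α^2) := step1
      _ ≤ (4*B + 6*t*(3*Real.sqrt 3*a*l^2 + 2*l^3))/(1024*α^2) := by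
          exact div_le_div_of_nonneg_right step2 (by positivity)
      _ = M + (3/4)*t*R := by rw [hM, hRdef]; field_simp; ring
  linarith [hfin]
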